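/- Let n ≥ 2 be an integer, λ, σ ∈ ℂ, and R > 0. Suppose v : ℝ^{n−1} → ℂ is smooth on the open ball B(0,R) and satisfies E(Ev) + (n−1+2σ)·Ev + (λ + σ(n−1+σ))·v = 0 on B(0,R), where Ev(Y) = Σⱼ Yⱼ ∂ⱼv(Y). If neither ŝ₊(λ) − σ nor ŝ₋(λ) − σ is a nonnegative integer, then v vanishes identically on B(0,R). -/

import Mathlib

/-- `∂ⱼ` on functions on `ℝ^m`. -/
noncomputable def pd {m : ℕ} (j : Fin m) (u : (Fin m → ℝ) → ℂ) (Y : Fin m → ℝ) : ℂ :=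
  fderiv ℝ u Y (Pi.single j 1)

/-- The Euler vector field `E u (Y) = Σⱼ Yⱼ ∂ⱼ u (Y)`. -/
noncomputable def euler {m : ℕ} (u : (Fin m → ℝ) → ℂ) (Y : Fin m → ℝ) : ℂ :=
  ∑ j, (Y j : ℂ) * pd j u Y

/-- The Euclidean Laplacian `Δ u = Σⱼ ∂ⱼ² u`. -/
noncomputable def lap {m : ℕ} (u : (Fin m → ℝ) → ℂ) (Y : Fin m → ℝ) : ℂ :=
  ∑ j, pd j (pd j u) Y

open Set Filter

lemma euler_eq_fderiv {m : ℕ} (u : (Fin m → ℝ) → ℂ) (Y : Fin m → ℝ) :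
    euler u Y = fderiv ℝ u Y Y := by
  unfold euler pd
  have h : (∑ j, (Y j) • (Pi.single j 1 : Fin m → ℝ)) = Y := by
    funext i
    simp [Finset.sum_apply, Pi.single_apply]
  have h2 : fderiv ℝ u Y Y = fderiv ℝ u Y (∑ j, (Y j) • (Pi.single j 1 : Fin m → ℝ)) := by
    rw [h]
  rw [h2, map_sum]
  apply Finset.sum_congr rfl
  intro j _
  rw [map_smul, Complex.real_smul]

lemma contDiffOn_euler {m : ℕ} {S : Set (Fin m → ℝ)} (hS : IsOpen S)
    {u : (Fin m → ℝ) → ℂ} (hu : ContDiffOn ℝ (⊤:ℕ∞) u S) :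
    ContDiffOn ℝ (⊤:ℕ∞) (euler u) S := by
  unfold euler pd
  apply ContDiffOn.sum
  intro j _
  apply ContDiffOn.mul
  · have h1 : ContDiff ℝ ((⊤:ℕ∞):WithTop ℕ∞) (fun Z : Fin m → ℝ => Z j) :=
      contDiff_pi.mp contDiff_id j
    exact (Complex.ofRealCLM.contDiff.comp h1).contDiffOn
  · exact (hu.fderiv_of_isOpen hS (by exact_mod_cast le_top)).clm_apply contDiffOn_const

lemma ray_ode {m : ℕ} {S : Set (Fin m → ℝ)} (hS : IsOpen S)
    {u : (Fin m → ℝ) → ℂ} (hu : ContDiffOn ℝ (⊤:ℕ∞) u S)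
    (Y : Fin m → ℝ) (t : ℝ) (ht : t • Y ∈ S) :
    (t:ℂ) * deriv (fun τ : ℝ => u (τ • Y)) t = euler u (t • Y) := by
  have hdiff : DifferentiableAt ℝ u (t • Y) :=
    (hu.contDiffAt (hS.mem_nhds ht)).differentiableAt (by simp)
  have hline : HasDerivAt (fun τ : ℝ => τ • Y) ((1:ℝ) • Y) t :=
    (hasDerivAt_id t).smul_const Y
  have hcomp : HasDerivAt (fun τ : ℝ => u (τ • Y)) (fderiv ℝ u (t • Y) Y) t := by
    have := hdiff.hasFDerivAt.comp_hasDerivAt t hline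
    simpa [Function.comp_def] using this
  rw [hcomp.deriv, euler_eq_fderiv]
  have : fderiv ℝ u (t • Y) (t • Y) = t • fderiv ℝ u (t • Y) Y := by
    rw [map_smul]
  rw [this, Complex.real_smul]

lemma lemA_core {T : ℝ} (hT : 0 < T) {s : ℂ} (hs : ∀ k : ℕ, s ≠ (k:ℂ))
    {f : ℝ → ℂ} (hf : ContDiffOn ℝ (⊤:ℕ∞) f (Ioo (-T) T))
    (heqf : ∀ t ∈ Ioo (-T) T, (t:ℂ) * deriv f t = s * f t) :
    ∀ t ∈ Ico 0 T, f t = 0 := by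
  have hSo : IsOpen (Ioo (-T) T) := isOpen_Ioo
  have h0m : (0:ℝ) ∈ Ioo (-T) T := ⟨neg_lt_zero.mpr hT, hT⟩
  have hCk : ∀ k : ℕ, ContDiffOn ℝ (⊤:ℕ∞) (deriv^[k] f) (Ioo (-T) T) := by
    intro k
    induction k with
    | zero => exact hf
    | succ k ih =>
        rw [Function.iterate_succ_apply']
        exact ih.deriv_of_isOpen hSo (by exact_mod_cast le_top)
  have hDk : ∀ k : ℕ, ∀ t ∈ Ioo (-T) T, DifferentiableAt ℝ (deriv^[k] f) t := by
    intro k t ht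
    exact ((hCk k).contDiffAt (hSo.mem_nhds ht)).differentiableAt (by simp)
  have hode : ∀ k : ℕ, ∀ t ∈ Ioo (-T) T,
      (t:ℂ) * deriv (deriv^[k] f) t = (s - k) * (deriv^[k] f) t := by
    intro k
    induction k with
    | zero => intro t ht; simpa using heqf t ht
    | succ k ih =>
        intro t ht
        have hib : deriv^[k+1] f = deriv (deriv^[k] f) := Function.iterate_succ_apply' deriv k f
        have ha : HasDerivAt (fun τ : ℝ => (τ:ℂ)) 1 t := (hasDerivAt_id t).ofReal_comp
        have hb : HasDerivAt (deriv^[k+1] f) (deriv (deriv^[k+1] f) t) t :=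
          (hDk (k+1) t ht).hasDerivAt
        have h1 : HasDerivAt (fun τ : ℝ => (τ:ℂ) * deriv^[k+1] f τ)
            (1 * deriv^[k+1] f t + (t:ℂ) * deriv (deriv^[k+1] f) t) t := ha.mul hb
        have hc : HasDerivAt (deriv^[k] f) (deriv^[k+1] f t) t := by
          have := (hDk k t ht).hasDerivAt
          rwa [← hib] at this
        have h2 : HasDerivAt (fun τ : ℝ => (s - (k:ℂ)) * deriv^[k] f τ)
            ((s - (k:ℂ)) * deriv^[k+1] f t) t := hc.const_mul _
        have h3 : (fun τ : ℝ => (τ:ℂ) * deriv^[k+1] f τ)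
            =ᶠ[nhds t] (fun τ : ℝ => (s - (k:ℂ)) * deriv^[k] f τ) := by
          filter_upwards [hSo.mem_nhds ht] with x hx
          rw [hib]
          exact ih x hx
        have h4 : HasDerivAt (fun τ : ℝ => (τ:ℂ) * deriv^[k+1] f τ)
            ((s - (k:ℂ)) * deriv^[k+1] f t) t := h2.congr_of_eventuallyEq h3
        have h5 := h1.unique h4
        push_cast
        linear_combination h5
  have hzero0 : ∀ k : ℕ, (deriv^[k] f) 0 = 0 := by
    intro k
    have h := hode k 0 h0m
    rw [Complex.ofReal_zero, zero_mul] at h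
    have hsk : s - (k:ℂ) ≠ 0 := sub_ne_zero.mpr (hs k)
    exact (mul_eq_zero.mp h.symm).resolve_left hsk
  obtain ⟨k, hk⟩ := exists_nat_gt s.re
  have hupos : ∀ t₀ ∈ Ioo (0:ℝ) T, (deriv^[k] f) t₀ = 0 := by
    intro t₀ ht₀
    set u : ℝ → ℂ := deriv^[k] f with hu
    set E : ℝ → ℂ := fun τ => Complex.exp (-(s - (k:ℂ)) * (Real.log τ : ℂ)) with hE
    have hHd : ∀ τ ∈ Ioo (0:ℝ) T, HasDerivAt (fun τ => u τ * E τ) 0 τ := by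
      intro τ hτ
      have hτ0 : τ ≠ 0 := ne_of_gt hτ.1
      have hτS : τ ∈ Ioo (-T) T := ⟨lt_trans (neg_lt_zero.mpr hT) hτ.1, hτ.2⟩
      have hlog : HasDerivAt (fun x : ℝ => ((Real.log x : ℝ) : ℂ)) (↑(τ⁻¹)) τ :=
        (Real.hasDerivAt_log hτ0).ofReal_comp
      have hEd : HasDerivAt E (Complex.exp (-(s - (k:ℂ)) * (Real.log τ : ℂ))
          * (-(s - (k:ℂ)) * ↑(τ⁻¹))) τ := by
        have := (hlog.const_mul (-(s - (k:ℂ)))).cexp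
        simpa [E] using this
      have hud : HasDerivAt u (deriv u τ) τ := (hDk k τ hτS).hasDerivAt
      have hprodd := hud.mul hEd
      have hkey := hode k τ hτS
      have hτc : (τ:ℂ) ≠ 0 := Complex.ofReal_ne_zero.mpr hτ0
      have hzero : deriv u τ * E τ + u τ * (Complex.exp (-(s - (k:ℂ)) * (Real.log τ : ℂ))
          * (-(s - (k:ℂ)) * ↑(τ⁻¹))) = 0 := by
        rw [Complex.ofReal_inv]
        have hrw : deriv u τ * E τ + u τ * (Complex.exp (-(s - (k:ℂ)) * (Real.log τ : ℂ))
            * (-(s - (k:ℂ)) * ((τ:ℂ))⁻¹))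
            = ((τ:ℂ))⁻¹ * E τ * ((τ:ℂ) * deriv u τ - (s - (k:ℂ)) * u τ) := by
          rw [hE]
          field_simp
          ring
        rw [hrw, hkey]
        simp [hu]
      rw [← hzero]
      exact hprodd
    have hconst : ∀ ε ∈ Ioc (0:ℝ) t₀, u t₀ * E t₀ = u ε * E ε := by
      intro ε hε
      have hsub : Icc ε t₀ ⊆ Ioo (0:ℝ) T := fun x hx =>
        ⟨lt_of_lt_of_le hε.1 hx.1, lt_of_le_of_lt hx.2 ht₀.2⟩
      have hcont : ContinuousOn (fun τ => u τ * E τ) (Icc ε t₀) := fun x hx =>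
        (hHd x (hsub hx)).continuousAt.continuousWithinAt
      have hder : ∀ x ∈ Ico ε t₀, HasDerivWithinAt (fun τ => u τ * E τ) 0 (Ici x) x :=
        fun x hx => (hHd x (hsub ⟨hx.1, hx.2.le⟩)).hasDerivWithinAt
      exact constant_of_has_deriv_right_zero hcont hder t₀ ⟨hε.2, le_refl _⟩
    have hulim : Tendsto (fun ε => ‖u ε‖) (nhdsWithin 0 (Ioi (0:ℝ))) (nhds 0) := by
      have hc : ContinuousAt u 0 :=
        ((hCk k).contDiffAt (hSo.mem_nhds h0m)).continuousAt
      have h2 : Tendsto u (nhdsWithin 0 (Ioi (0:ℝ))) (nhds (u 0)) :=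
        hc.continuousWithinAt.tendsto
      rw [show u 0 = 0 from hzero0 k] at h2
      simpa using h2.norm
    have hbound : ∀ᶠ ε in nhdsWithin 0 (Ioi (0:ℝ)), ‖u t₀ * E t₀‖ ≤ ‖u ε‖ := by
      have hmem : Ioc (0:ℝ) (min 1 t₀) ∈ nhdsWithin 0 (Ioi (0:ℝ)) :=
        Ioc_mem_nhdsGT_of_mem ⟨le_refl _, lt_min one_pos ht₀.1⟩
      filter_upwards [hmem] with ε hε
      rw [hconst ε ⟨hε.1, le_trans hε.2 (min_le_right _ _)⟩, norm_mul]
      have hEle : ‖E ε‖ ≤ 1 := by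
        rw [hE]
        simp only [Complex.norm_exp]
        rw [Real.exp_le_one_iff]
        have hre : (-(s - (k:ℂ)) * (Real.log ε : ℂ)).re = ((k:ℝ) - s.re) * Real.log ε := by
          first
          | (simp [Complex.mul_re]; ring)
          | simp [Complex.mul_re]
          | (simp only [Complex.mul_re, Complex.ofReal_re, Complex.ofReal_im]; ring)
        rw [hre]
        apply mul_nonpos_of_nonneg_of_nonpos
        · linarith
        · exact Real.log_nonpos hε.1.le (le_trans hε.2 (min_le_left _ _))
      calc ‖u ε‖ * ‖E ε‖ ≤ ‖u ε‖ * 1 := by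
            exact mul_le_mul_of_nonneg_left hEle (norm_nonneg _)
        _ = ‖u ε‖ := mul_one _
    have hle : ‖u t₀ * E t₀‖ ≤ 0 := ge_of_tendsto hulim hbound
    have h0 : u t₀ * E t₀ = 0 := norm_le_zero_iff.mp hle
    rcases mul_eq_zero.mp h0 with h | h
    · exact h
    · exact absurd h (Complex.exp_ne_zero _)
  have hdown : ∀ d : ℕ, ∀ t ∈ Ico (0:ℝ) T, deriv^[k - d] f t = 0 := by
    intro d
    induction d with
    | zero =>
        intro t ht
        rcases eq_or_lt_of_le ht.1 with h | h
        · rw [← h]; simpa using hzero0 k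
        · simpa using hupos t ⟨h, ht.2⟩
    | succ d ih =>
        intro t ht
        by_cases hdk : k ≤ d
        · have he : k - (d+1) = k - d := by omega
          rw [he]; exact ih t ht
        · have hjj : k - d = (k - (d+1)) + 1 := by omega
          rcases eq_or_lt_of_le ht.1 with h | h
          · rw [← h]; exact hzero0 _
          · have htS : t ∈ Ioo (-T) T := ⟨lt_trans (neg_lt_zero.mpr hT) h, ht.2⟩
            have hO := hode (k - (d+1)) t htS
            have hder0 : deriv (deriv^[k - (d+1)] f) t = 0 := by
              have h7 := ih t ht
              rw [hjj, Function.iterate_succ_apply'] at h7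
              exact h7
            rw [hder0, mul_zero] at hO
            have hsj : s - ((k - (d+1) : ℕ):ℂ) ≠ 0 := sub_ne_zero.mpr (hs _)
            exact (mul_eq_zero.mp hO.symm).resolve_left hsj
  intro t ht
  have := hdown k t ht
  simpa using this

lemma lemA {T : ℝ} (hT : 0 < T) {s : ℂ} (hs : ∀ k : ℕ, s ≠ (k:ℂ))
    {f : ℝ → ℂ} (hf : ContDiffOn ℝ (⊤:ℕ∞) f (Ioo (-T) T))
    (heqf : ∀ t ∈ Ioo (-T) T, (t:ℂ) * deriv f t = s * f t) :
    ∀ t ∈ Ioo (-T) T, f t = 0 := by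
  intro t ht
  rcases le_or_gt 0 t with h | h
  · exact lemA_core hT hs hf heqf t ⟨h, ht.2⟩
  · have hmapsneg : ∀ x ∈ Ioo (-T) T, -x ∈ Ioo (-T) T := fun x hx =>
      ⟨by linarith [hx.2], by linarith [hx.1]⟩
    have hneg : ContDiffOn ℝ (⊤:ℕ∞) (fun τ : ℝ => f (-τ)) (Ioo (-T) T) :=
      hf.comp (contDiff_neg.contDiffOn) (fun x hx => hmapsneg x hx)
    have heq' : ∀ τ ∈ Ioo (-T) T, (τ:ℂ) * deriv (fun τ : ℝ => f (-τ)) τ = s * f (-τ) := by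
      intro τ hτ
      rw [deriv_comp_neg]
      have h2 := heqf (-τ) (hmapsneg τ hτ)
      push_cast at h2 ⊢
      linear_combination h2
    have := lemA_core hT hs hneg heq' (-t) ⟨neg_nonneg.mpr h.le, by linarith [ht.1]⟩
    simpa using this

theorem stmt18 (n : ℕ) (hn : 2 ≤ n) (lam σ w : ℂ)
    (hw : w ^ 2 = (((n : ℂ) - 1) / 2) ^ 2 - lam)
    (hplus : ∀ k : ℕ, (-((n : ℂ) - 1) / 2 + w) - σ ≠ (k : ℂ))
    (hminus : ∀ k : ℕ, (-((n : ℂ) - 1) / 2 - w) - σ ≠ (k : ℂ))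
    (R : ℝ) (hR : 0 < R)
    (v : (Fin (n - 1) → ℝ) → ℂ)
    (hv : ContDiffOn ℝ (⊤ : ℕ∞) v {Y : Fin (n - 1) → ℝ | ∑ j, (Y j) ^ 2 < R ^ 2})
    (heq : ∀ Y ∈ {Y : Fin (n - 1) → ℝ | ∑ j, (Y j) ^ 2 < R ^ 2},
      euler (fun Z => euler v Z) Y + ((n : ℂ) - 1 + 2 * σ) * euler v Y
        + (lam + σ * ((n : ℂ) - 1 + σ)) * v Y = 0) :
    ∀ Y ∈ {Y : Fin (n - 1) → ℝ | ∑ j, (Y j) ^ 2 < R ^ 2}, v Y = 0 := by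
  set S : Set (Fin (n-1) → ℝ) := {Y : Fin (n - 1) → ℝ | ∑ j, (Y j) ^ 2 < R ^ 2} with hSdef
  have hSo : IsOpen S := by
    have hc : Continuous fun Y : Fin (n-1) → ℝ => ∑ j, (Y j)^2 :=
      continuous_finset_sum _ (fun j _ => (continuous_apply j).pow 2)
    exact isOpen_lt hc continuous_const
  intro Y hY
  have hq0 : (0:ℝ) ≤ ∑ j, (Y j)^2 := Finset.sum_nonneg (fun j _ => sq_nonneg _)
  have hqR : (∑ j, (Y j)^2) < R^2 := hY
  have hsum_smul : ∀ t : ℝ, (∑ j, ((t • Y) j)^2) = t^2 * ∑ j, (Y j)^2 := by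
    intro t
    rw [Finset.mul_sum]
    congr 1
    funext j
    simp [mul_pow]
  obtain ⟨T, hT1, hmaps⟩ : ∃ T : ℝ, 1 < T ∧ ∀ t ∈ Ioo (-T) T, t • Y ∈ S := by
    rcases eq_or_lt_of_le hq0 with h0 | h0
    · refine ⟨2, one_lt_two, fun t ht => ?_⟩
      show (∑ j, ((t • Y) j)^2) < R^2
      rw [hsum_smul, ← h0, mul_zero]
      positivity
    · refine ⟨R / Real.sqrt (∑ j, (Y j)^2), ?_, ?_⟩
      · rw [lt_div_iff₀ (Real.sqrt_pos.mpr h0), one_mul]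
        calc Real.sqrt (∑ j, (Y j)^2) < Real.sqrt (R^2) :=
              Real.sqrt_lt_sqrt hq0 hqR
          _ = R := Real.sqrt_sq hR.le
      · intro t ht
        show (∑ j, ((t • Y) j)^2) < R^2
        rw [hsum_smul]
        have hT0 : 0 < R / Real.sqrt (∑ j, (Y j)^2) :=
          div_pos hR (Real.sqrt_pos.mpr h0)
        have ht2 : t^2 < (R / Real.sqrt (∑ j, (Y j)^2))^2 :=
          sq_lt_sq' ht.1 ht.2
        have hT2 : (R / Real.sqrt (∑ j, (Y j)^2))^2 = R^2 / (∑ j, (Y j)^2) := by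
          rw [div_pow, Real.sq_sqrt hq0]
        rw [hT2] at ht2
        calc t^2 * (∑ j, (Y j)^2) < (R^2 / (∑ j, (Y j)^2)) * (∑ j, (Y j)^2) :=
              mul_lt_mul_of_pos_right ht2 h0
          _ = R^2 := div_mul_cancel₀ _ (ne_of_gt h0)
  have hT : (0:ℝ) < T := lt_trans one_pos hT1
  set sp : ℂ := (-((n : ℂ) - 1) / 2 + w) - σ with hspdef
  set sm : ℂ := (-((n : ℂ) - 1) / 2 - w) - σ with hsmdef
  have hsum2 : sp + sm = -(((n:ℂ) - 1) + 2*σ) := by rw [hspdef, hsmdef]; ring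
  have hprod2 : sp * sm = lam + σ*((n:ℂ) - 1 + σ) := by
    rw [hspdef, hsmdef]; linear_combination -hw
  set g : ℝ → ℂ := fun t => v (t • Y) with hgdef
  set G : ℝ → ℂ := fun t => euler v (t • Y) with hGdef
  have hlineC : ContDiffOn ℝ (⊤:ℕ∞) (fun t : ℝ => t • Y) (Ioo (-T) T) :=
    (contDiff_id.smul contDiff_const).contDiffOn
  have hgC : ContDiffOn ℝ (⊤:ℕ∞) g (Ioo (-T) T) :=
    hv.comp hlineC (fun t ht => hmaps t ht)
  have hEvC : ContDiffOn ℝ (⊤:ℕ∞) (euler v) S := contDiffOn_euler hSo hv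
  have hGC : ContDiffOn ℝ (⊤:ℕ∞) G (Ioo (-T) T) :=
    hEvC.comp hlineC (fun t ht => hmaps t ht)
  have hg' : ∀ t ∈ Ioo (-T) T, (t:ℂ) * deriv g t = G t := fun t ht =>
    ray_ode hSo hv Y t (hmaps t ht)
  have hG' : ∀ t ∈ Ioo (-T) T, (t:ℂ) * deriv G t = euler (euler v) (t • Y) := fun t ht =>
    ray_ode hSo hEvC Y t (hmaps t ht)
  set p : ℝ → ℂ := fun t => G t - sm * g t with hpdef
  have hpC : ContDiffOn ℝ (⊤:ℕ∞) p (Ioo (-T) T) :=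
    hGC.sub (contDiffOn_const.mul hgC)
  have hpode : ∀ t ∈ Ioo (-T) T, (t:ℂ) * deriv p t = sp * p t := by
    intro t ht
    have hdg : DifferentiableAt ℝ g t :=
      (hgC.contDiffAt (isOpen_Ioo.mem_nhds ht)).differentiableAt (by simp)
    have hdG : DifferentiableAt ℝ G t :=
      (hGC.contDiffAt (isOpen_Ioo.mem_nhds ht)).differentiableAt (by simp)
    have hderp : deriv p t = deriv G t - sm * deriv g t := by
      rw [hpdef]
      rw [deriv_fun_sub hdG (hdg.const_mul sm), deriv_const_mul sm hdg]
    have hpde := heq (t • Y) (hmaps t ht)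
    have he2 : euler (fun Z => euler v Z) (t • Y) = euler (euler v) (t • Y) := rfl
    rw [he2] at hpde
    have hGt := hG' t ht
    have hgt := hg' t ht
    show (t:ℂ) * deriv p t = sp * (G t - sm * g t)
    rw [hderp]
    have hvg : v (t • Y) = g t := rfl
    have hEvG : euler v (t • Y) = G t := rfl
    rw [hvg, hEvG] at hpde
    linear_combination hGt + hpde - sm * hgt - (G t) * hsum2 + (g t) * hprod2
  have hp0 : ∀ t ∈ Ioo (-T) T, p t = 0 :=
    lemA hT (fun k => by rw [hspdef]; exact hplus k) hpC hpode
  have hgode : ∀ t ∈ Ioo (-T) T, (t:ℂ) * deriv g t = sm * g t := by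
    intro t ht
    have hpt := hp0 t ht
    have hGg : G t = sm * g t := by
      have : G t - sm * g t = 0 := hpt
      linear_combination this
    rw [hg' t ht, hGg]
  have hgz := lemA_core hT (fun k => by rw [hsmdef]; exact hminus k) hgC hgode
    1 ⟨zero_le_one, hT1⟩
  have : g 1 = v Y := by rw [hgdef]; norm_num
  rw [← this]
  exact hgz
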